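/- arXiv:math/0501333 — 3 statements merged into one kernel-verified Lean document; each statement's English description precedes it below -/
import Mathlib

section
/- Any two surjective group homomorphisms from the free group on two generators onto the quaternion group of order 8 have the same kernel: if φ, ψ : F₂ → Q₈ are surjective homomorphisms, then ker φ = ker ψ. -/
namespace KerUniqueAux

abbrev Q := QuaternionGroup 2

def ii : Q := QuaternionGroup.a 1
def jj : Q := QuaternionGroup.xa 0

def canon : List Q := [1, ii, ii^2, ii^3, jj, ii*jj, ii^2*jj, ii^3*jj]

def D (p q : Q) : Prop := ∀ g : Q, g ∈ [1, p, p^2, p^3, q, p*q, p^2*q, p^3*q]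

instance (p q : Q) : Decidable (D p q) := by unfold D; infer_instance

def F (p q : Q) (g : Q) : Q := p ^ (canon.idxOf g % 4) * q ^ (canon.idxOf g / 4)

lemma master : ∀ p q : Q, D p q →
    (∀ x y : Q, F p q (x * y) = F p q x * F p q y) ∧
    F p q ii = p ∧ F p q jj = q ∧ (∀ x y : Q, F p q x = F p q y → x = y) := by decide

lemma CL : ∀ p q : Q, D p q ∨ ∃ x : Q, p ∈ [1, x, x^2, x^3] ∧ q ∈ [1, x, x^2, x^3] := by
  decide

lemma mem_zpowers_of_mem_list {p x : Q} (h : p ∈ [1, x, x^2, x^3]) :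
    p ∈ Subgroup.zpowers x := by
  simp only [List.mem_cons, List.not_mem_nil, or_false] at h
  rcases h with rfl | rfl | rfl | rfl
  · exact one_mem _
  · exact Subgroup.mem_zpowers _
  · exact pow_mem (Subgroup.mem_zpowers _) 2
  · exact pow_mem (Subgroup.mem_zpowers _) 3

lemma gen_of_surj (φ : FreeGroup (Fin 2) →* Q) (hφ : Function.Surjective φ) :
    D (φ (FreeGroup.of 0)) (φ (FreeGroup.of 1)) := by
  rcases CL (φ (FreeGroup.of 0)) (φ (FreeGroup.of 1)) with h | ⟨x, hp, hq⟩
  · exact h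
  · exfalso
    have h0 := mem_zpowers_of_mem_list hp
    have h1 := mem_zpowers_of_mem_list hq
    have hmem : ∀ g : Q, g ∈ Subgroup.zpowers x := by
      intro g
      obtain ⟨w, rfl⟩ := hφ g
      induction w using FreeGroup.induction_on with
      | C1 => simpa using one_mem _
      | of t =>
        fin_cases t
        · exact h0
        · exact h1
      | inv_of t ih => simpa using inv_mem ih
      | mul u v hu hv => simpa [map_mul] using mul_mem hu hv
    have hnc : ii * jj ≠ jj * ii := by decide
    obtain ⟨m, hm⟩ := Subgroup.mem_zpowers_iff.mp (hmem ii)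
    obtain ⟨n, hn⟩ := Subgroup.mem_zpowers_iff.mp (hmem jj)
    exact hnc (by rw [← hm, ← hn, ← zpow_add, ← zpow_add, add_comm])

lemma key (χ : FreeGroup (Fin 2) →* Q) (hχ : Function.Surjective χ) :
    χ.ker = (FreeGroup.lift ![ii, jj]).ker := by
  obtain ⟨hmul, hi, hj, hinj⟩ := master _ _ (gen_of_surj χ hχ)
  let G : Q →* Q := MonoidHom.mk' (F (χ (FreeGroup.of 0)) (χ (FreeGroup.of 1))) hmul
  have hcomp : χ = G.comp (FreeGroup.lift ![ii, jj]) := by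
    apply FreeGroup.ext_hom
    intro t
    fin_cases t
    · simpa [G] using hi.symm
    · simpa [G] using hj.symm
  have hGinj : Function.Injective G := fun x y h => hinj x y h
  rw [hcomp, ← MonoidHom.comap_ker, (MonoidHom.ker_eq_bot_iff G).mpr hGinj,
    MonoidHom.comap_bot]

end KerUniqueAux

/-- Any two surjective group homomorphisms from the free group on two generators
onto the quaternion group of order 8 have the same kernel. -/
theorem kernel_unique_freeGroup_to_quaternion
    (φ ψ : FreeGroup (Fin 2) →* QuaternionGroup 2)
    (hφ : Function.Surjective φ) (hψ : Function.Surjective ψ) :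
    φ.ker = ψ.ker := by
  rw [KerUniqueAux.key φ hφ, KerUniqueAux.key ψ hψ]
end

section
/- The kernel of any surjective group homomorphism from the free group on two generators onto the quaternion group of order 8 is a characteristic subgroup of the free group: if φ : F₂ → Q₈ is a surjective homomorphism, then for every automorphism α of F₂ one has α(ker φ) = ker φ. -/
namespace QuatAux

open QuaternionGroup Subgroup

abbrev Q := QuaternionGroup 2

/-- membership in the cyclic maximal subgroup ⟨a 1⟩ -/
def p1 (g : Q) : Prop := ∃ i, g = a i
/-- membership in the maximal subgroup ⟨xa 0⟩ -/
def p2 (g : Q) : Prop := g = a 0 ∨ g = a 2 ∨ g = xa 0 ∨ g = xa 2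
/-- membership in the maximal subgroup ⟨xa 1⟩ -/
def p3 (g : Q) : Prop := g = a 0 ∨ g = a 2 ∨ g = xa 1 ∨ g = xa 3

instance : DecidablePred p1 := fun g => by unfold p1; infer_instance
instance : DecidablePred p2 := fun g => by unfold p2; infer_instance
instance : DecidablePred p3 := fun g => by unfold p3; infer_instance

def M1 : Subgroup Q where
  carrier := {g | p1 g}
  one_mem' := by decide
  mul_mem' := fun {x y} hx hy => (by decide : ∀ x y : Q, p1 x → p1 y → p1 (x * y)) x y hx hy
  inv_mem' := fun {x} hx => (by decide : ∀ x : Q, p1 x → p1 x⁻¹) x hx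

def M2 : Subgroup Q where
  carrier := {g | p2 g}
  one_mem' := by decide
  mul_mem' := fun {x y} hx hy => (by decide : ∀ x y : Q, p2 x → p2 y → p2 (x * y)) x y hx hy
  inv_mem' := fun {x} hx => (by decide : ∀ x : Q, p2 x → p2 x⁻¹) x hx

def M3 : Subgroup Q where
  carrier := {g | p3 g}
  one_mem' := by decide
  mul_mem' := fun {x y} hx hy => (by decide : ∀ x y : Q, p3 x → p3 y → p3 (x * y)) x y hx hy
  inv_mem' := fun {x} hx => (by decide : ∀ x : Q, p3 x → p3 x⁻¹) x hx

/-- any pair not jointly contained in a maximal subgroup satisfies the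
quaternion relations. -/
lemma classify : ∀ u v : Q, ¬(p1 u ∧ p1 v) → ¬(p2 u ∧ p2 v) → ¬(p3 u ∧ p3 v) →
    v ^ 2 = u ^ 2 ∧ v * u = u⁻¹ * v := by decide

/-- the candidate homomorphism sending the standard generators `a 1, xa 0` to `u, v`. -/
def f (u v : Q) : Q → Q
  | a i => u ^ i.val
  | xa i => u ^ (-i).val * v

lemma f_mul : ∀ u v : Q, v ^ 2 = u ^ 2 → v * u = u⁻¹ * v →
    ∀ x y : Q, f u v (x * y) = f u v x * f u v y := by decide

lemma relations_of_closure {u v : Q} (h : Subgroup.closure {u, v} = ⊤) :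
    v ^ 2 = u ^ 2 ∧ v * u = u⁻¹ * v := by
  apply classify
  · rintro ⟨hu, hv⟩
    have hle : Subgroup.closure {u, v} ≤ M1 := by
      rw [Subgroup.closure_le]
      rintro g (rfl | rfl) <;> assumption
    rw [h] at hle
    exact (by decide : ¬ p1 (xa 0)) (hle (Subgroup.mem_top _))
  · rintro ⟨hu, hv⟩
    have hle : Subgroup.closure {u, v} ≤ M2 := by
      rw [Subgroup.closure_le]
      rintro g (rfl | rfl) <;> assumption
    rw [h] at hle
    exact (by decide : ¬ p2 (a 1)) (hle (Subgroup.mem_top _))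
  · rintro ⟨hu, hv⟩
    have hle : Subgroup.closure {u, v} ≤ M3 := by
      rw [Subgroup.closure_le]
      rintro g (rfl | rfl) <;> assumption
    rw [h] at hle
    exact (by decide : ¬ p3 (a 1)) (hle (Subgroup.mem_top _))

/-- the homomorphism sending the standard generators to `u, v`. -/
def toHom (u v : Q) (h : Subgroup.closure {u, v} = ⊤) : Q →* Q :=
  MonoidHom.mk' (f u v)
    (f_mul u v (relations_of_closure h).1 (relations_of_closure h).2)

lemma toHom_a1 (u v : Q) (h : Subgroup.closure {u, v} = ⊤) : toHom u v h (a 1) = u := by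
  show u ^ (1 : ZMod 4).val = u
  rw [show (1 : ZMod 4).val = 1 by decide, pow_one]

lemma toHom_xa0 (u v : Q) (h : Subgroup.closure {u, v} = ⊤) : toHom u v h (xa 0) = v := by
  show u ^ ((-0 : ZMod 4)).val * v = v
  rw [neg_zero, ZMod.val_zero, pow_zero, one_mul]

lemma exists_hom (u v c d : Q) (huv : Subgroup.closure {u, v} = ⊤)
    (hcd : Subgroup.closure {c, d} = ⊤) : ∃ e : Q →* Q, e u = c ∧ e v = d := by
  set e₁ := toHom u v huv with he₁
  set e₂ := toHom c d hcd with he₂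
  have hsurj : Function.Surjective e₁ := by
    rw [← MonoidHom.range_eq_top]
    rw [eq_top_iff, ← huv, Subgroup.closure_le]
    have hu : u ∈ e₁.range := ⟨a 1, toHom_a1 u v huv⟩
    have hv : v ∈ e₁.range := ⟨xa 0, toHom_xa0 u v huv⟩
    rintro g (rfl | rfl) <;> assumption
  have hbij : Function.Bijective e₁ := (Finite.surjective_iff_bijective).mp hsurj
  set E := MulEquiv.ofBijective e₁ hbij with hE
  refine ⟨e₂.comp E.symm.toMonoidHom, ?_, ?_⟩
  · have : E.symm u = a 1 := by
      rw [MulEquiv.symm_apply_eq]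
      show u = e₁ (a 1)
      exact (toHom_a1 u v huv).symm
    simp only [MonoidHom.comp_apply, MulEquiv.coe_toMonoidHom, this]
    exact toHom_a1 c d hcd
  · have : E.symm v = xa 0 := by
      rw [MulEquiv.symm_apply_eq]
      show v = e₁ (xa 0)
      exact (toHom_xa0 u v huv).symm
    simp only [MonoidHom.comp_apply, MulEquiv.coe_toMonoidHom, this]
    exact toHom_xa0 c d hcd

lemma closure_pair_of_surjective (χ : FreeGroup (Fin 2) →* Q)
    (hχ : Function.Surjective χ) :
    Subgroup.closure {χ (FreeGroup.of 0), χ (FreeGroup.of 1)} = ⊤ := by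
  have hr : Set.range (FreeGroup.of : Fin 2 → FreeGroup (Fin 2)) =
      {FreeGroup.of 0, FreeGroup.of 1} := by
    ext z
    simp [Set.mem_range, Fin.exists_fin_two]
    tauto
  have := FreeGroup.closure_range_of (Fin 2)
  calc Subgroup.closure {χ (FreeGroup.of 0), χ (FreeGroup.of 1)}
      = Subgroup.closure (χ '' {FreeGroup.of 0, FreeGroup.of 1}) := by
        rw [Set.image_pair]
    _ = (Subgroup.closure {FreeGroup.of 0, FreeGroup.of 1}).map χ :=
        (MonoidHom.map_closure χ _).symm
    _ = (⊤ : Subgroup (FreeGroup (Fin 2))).map χ := by rw [← hr, this]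
    _ = χ.range := (MonoidHom.range_eq_map χ).symm
    _ = ⊤ := MonoidHom.range_eq_top.2 hχ

end QuatAux

/-- The kernel of any surjective homomorphism from the free group on two
generators onto the quaternion group of order 8 is a characteristic subgroup. -/
theorem kernel_characteristic_freeGroup_to_quaternion
    (φ : FreeGroup (Fin 2) →* QuaternionGroup 2)
    (hφ : Function.Surjective φ) (α : MulAut (FreeGroup (Fin 2))) :
    φ.ker.map α.toMonoidHom = φ.ker := by
  set ψ := φ.comp α.symm.toMonoidHom with hψdef
  have hψ : Function.Surjective ψ := hφ.comp α.symm.surjective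
  have h1 := QuatAux.closure_pair_of_surjective φ hφ
  have h2 := QuatAux.closure_pair_of_surjective ψ hψ
  obtain ⟨e, he0, he1⟩ := QuatAux.exists_hom _ _ _ _ h1 h2
  obtain ⟨e', he'0, he'1⟩ := QuatAux.exists_hom _ _ _ _ h2 h1
  have hcomp : ψ = e.comp φ := by
    apply FreeGroup.ext_hom
    intro i
    fin_cases i
    · exact he0.symm
    · exact he1.symm
  have hcomp' : φ = e'.comp ψ := by
    apply FreeGroup.ext_hom
    intro i
    fin_cases i
    · exact he'0.symm
    · exact he'1.symm
  have hker : ψ.ker = φ.ker := by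
    apply le_antisymm
    · intro x hx
      have : φ x = e' (ψ x) := by rw [hcomp']; rfl
      rw [MonoidHom.mem_ker] at hx ⊢
      rw [this, hx, map_one]
    · intro x hx
      have : ψ x = e (φ x) := by rw [hcomp]; rfl
      rw [MonoidHom.mem_ker] at hx ⊢
      rw [this, hx, map_one]
  calc φ.ker.map α.toMonoidHom
      = φ.ker.comap α.symm.toMonoidHom := Subgroup.map_equiv_eq_comap_symm α φ.ker
    _ = ψ.ker := MonoidHom.comap_ker φ α.symm.toMonoidHom
    _ = φ.ker := hker
end

section
/- Let G be a group, let a, b, c₁, c₂, c₃ ∈ G satisfy c₁ c₂ c₃ = a b a⁻¹ b⁻¹, and let φ : G → Perm(Fin 3) be a group homomorphism such that φ(a), φ(b), φ(c₁), φ(c₂), φ(c₃), φ(a·c₃) and φ(b·c₁⁻¹) are all 3-cycles. Then φ(c₁) = φ(c₂) = φ(c₃) = φ(a) and φ(b) = φ(a)⁻¹. -/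
set_option synthInstance.maxSize 400 in
set_option maxHeartbeats 2000000 in
private lemma key : ∀ A B C1 C2 C3 : Equiv.Perm (Fin 3),
    C1 * C2 * C3 = A * B * A⁻¹ * B⁻¹ →
    A.support.card = 3 → B.support.card = 3 →
    C1.support.card = 3 → C2.support.card = 3 → C3.support.card = 3 →
    (A * C3).support.card = 3 → (B * C1⁻¹).support.card = 3 →
    C1 = A ∧ C2 = A ∧ C3 = A ∧ B = A⁻¹ := by decide

/-- The monodromy computation of Lemma 4.14: if `c₁c₂c₃ = aba⁻¹b⁻¹` and the
images under `φ : G →* Perm (Fin 3)` of `a`, `b`, `c₁`, `c₂`, `c₃`, `a·c₃` and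
`b·c₁⁻¹` are all 3-cycles, then `φ(c₁) = φ(c₂) = φ(c₃) = φ(a)` and
`φ(b) = φ(a)⁻¹`. -/
theorem monodromy_degree_three_classification {G : Type*} [Group G]
    (a b c₁ c₂ c₃ : G) (hrel : c₁ * c₂ * c₃ = a * b * a⁻¹ * b⁻¹)
    (φ : G →* Equiv.Perm (Fin 3))
    (ha : (φ a).IsThreeCycle) (hb : (φ b).IsThreeCycle)
    (hc₁ : (φ c₁).IsThreeCycle) (hc₂ : (φ c₂).IsThreeCycle)
    (hc₃ : (φ c₃).IsThreeCycle)
    (hac₃ : (φ (a * c₃)).IsThreeCycle)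
    (hbc₁ : (φ (b * c₁⁻¹)).IsThreeCycle) :
    φ c₁ = φ a ∧ φ c₂ = φ a ∧ φ c₃ = φ a ∧ φ b = (φ a)⁻¹ := by
  have hrel' : φ c₁ * φ c₂ * φ c₃ = φ a * φ b * (φ a)⁻¹ * (φ b)⁻¹ := by
    simpa [map_mul, map_inv] using congrArg φ hrel
  rw [map_mul] at hac₃
  rw [map_mul, map_inv] at hbc₁
  exact key (φ a) (φ b) (φ c₁) (φ c₂) (φ c₃) hrel'
    (card_support_eq_three_iff.2 ha) (card_support_eq_three_iff.2 hb)
    (card_support_eq_three_iff.2 hc₁) (card_support_eq_three_iff.2 hc₂)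
    (card_support_eq_three_iff.2 hc₃) (card_support_eq_three_iff.2 hac₃)
    (card_support_eq_three_iff.2 hbc₁)
end
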